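/- Let f(u,v) = a − u + u²v and g(u,v) = b − u²v with a, b > 0, and let W(u,v) = u + 2v + c/(u+1) + 1/(v+1). If c > max{(2a+4b)/a, 2a+4b}, then there exists K̄ > 0 such that for all u, v ≥ 0 with u + v ≥ K̄, one has (1 − c/(u+1)²)·(a − u + u²v) + (2 − 1/(v+1)²)·(b − u²v) ≤ 0. -/
import Mathlib

open Filter Topology

private lemma aux_inv_le_one (x p : ℝ) (hx : 0 ≤ x) (hp : p * (x+1)^2 = 1)
    (hp0 : 0 < p) : p ≤ 1 := by
  nlinarith [mul_nonneg hp0.le (by nlinarith : (0:ℝ) ≤ x^2 + 2*x)]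

private lemma aux_pu (u p : ℝ) (hu : 0 ≤ u) (hp : p * (u+1)^2 = 1)
    (hp0 : 0 < p) : p * u ≤ 1/4 := by
  nlinarith [mul_nonneg hp0.le (sq_nonneg (u-1))]

private lemma aux_qv (v q : ℝ) (hv : 0 ≤ v) (hq : q * (v+1)^2 = 1)
    (hq0 : 0 < q) : q * v ≤ 1 := by
  nlinarith [mul_nonneg hq0.le (by nlinarith : (0:ℝ) ≤ v^2 + v + 1)]

private lemma aux_plb (u t p : ℝ) (hu : 0 ≤ u) (hut : u ≤ t)
    (hp : p * (u+1)^2 = 1) (hp0 : 0 < p) : 1 - 2*t ≤ p := by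
  nlinarith [mul_nonneg (by linarith : (0:ℝ) ≤ t - u) (sq_nonneg (u+1)),
    mul_nonneg (mul_nonneg hu hu) hu, sq_nonneg u]

private lemma aux_qM (v q M δ : ℝ) (hv : 0 ≤ v) (hq : q * (v+1)^2 = 1)
    (hq0 : 0 < q) (hd : 0 < δ) (h : 2*M ≤ δ * v) : 2 * (q * M) ≤ δ := by
  have G1 : q * (2*M) ≤ q * (δ * v) := mul_le_mul_of_nonneg_left h hq0.le
  have G2 : δ * (q * (v+1)^2) = δ * 1 := by rw [hq]
  have G3 : 0 ≤ δ * (q * v^2) := mul_nonneg hd.le (mul_nonneg hq0.le (sq_nonneg v))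
  have G4 : 0 ≤ δ * (q * v) := mul_nonneg hd.le (mul_nonneg hq0.le hv)
  have G5 : 0 ≤ δ * q := mul_nonneg hd.le hq0.le
  nlinarith [G1, G2, G3, G4, G5]

set_option maxHeartbeats 1000000 in
/-- for the Schnakenberg kinetics `f = a − u + u²v`,
`g = b − u²v` and the LLF `W(u,v) = u + 2v + c/(u+1) + 1/(v+1)` with
`c > max{(2a+4b)/a, 2a+4b}`, there is `K̄ > 0` such that whenever `u+v ≥ K̄`
on the quadrant, `∇W · (f,g) ≤ 0`. -/
theorem stmt10 (a b c : ℝ) (ha : 0 < a) (hb : 0 < b)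
    (hc : max ((2 * a + 4 * b) / a) (2 * a + 4 * b) < c) :
    ∃ K > (0 : ℝ), ∀ u v : ℝ, 0 ≤ u → 0 ≤ v → K ≤ u + v →
      (1 - c / (u + 1) ^ 2) * (a - u + u ^ 2 * v) +
        (2 - 1 / (v + 1) ^ 2) * (b - u ^ 2 * v) ≤ 0 := by
  have hc1 : (2 * a + 4 * b) / a < c := lt_of_le_of_lt (le_max_left _ _) hc
  have hc2 : 2 * a + 4 * b < c := lt_of_le_of_lt (le_max_right _ _) hc
  have hc0 : 0 < c := by linarith
  have hca : 2 * a + 4 * b < c * a := by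
    have := (div_lt_iff₀ ha).mp hc1; linarith
  obtain ⟨U, hUdef⟩ : ∃ x : ℝ, x = a + 2*b + c/4 + 1 := ⟨_, rfl⟩
  have hU1 : 1 ≤ U := by rw [hUdef]; nlinarith
  obtain ⟨M, hMdef⟩ : ∃ x : ℝ, x = a + 2*b + U^2 := ⟨_, rfl⟩
  have hMpos : 0 < M := by rw [hMdef]; nlinarith [sq_nonneg U]
  obtain ⟨δ, hddef⟩ : ∃ x : ℝ, x = c*a - a - 2*b := ⟨_, rfl⟩
  have hdpos : 0 < δ := by rw [hddef]; linarith
  have hden : 0 < 2*c + 4*c*a + 1 := by nlinarith [mul_pos hc0 ha]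
  obtain ⟨t, htdef⟩ : ∃ x : ℝ, x = δ / (2*c + 4*c*a + 1) := ⟨_, rfl⟩
  have htpos : 0 < t := htdef ▸ div_pos hdpos hden
  have htsum : (2*c + 4*c*a) * t ≤ δ := by
    have h1 : t * (2*c + 4*c*a + 1) = δ := by
      rw [htdef]; field_simp
    nlinarith [htpos]
  obtain ⟨V, hVdef⟩ : ∃ x : ℝ, x = max 1 (max (M / t^2) (2*M/δ)) := ⟨_, rfl⟩
  have hV1 : 1 ≤ V := hVdef ▸ le_max_left _ _
  have hVt : M / t^2 ≤ V := hVdef ▸ le_trans (le_max_left _ _) (le_max_right _ _)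
  have hVd : 2*M/δ ≤ V := hVdef ▸ le_trans (le_max_right _ _) (le_max_right _ _)
  refine ⟨U + V, by linarith, ?_⟩
  intro u v hu hv hK
  have hu1 : (0:ℝ) < u + 1 := by linarith
  have hv1 : (0:ℝ) < v + 1 := by linarith
  obtain ⟨p, hpdef⟩ : ∃ x : ℝ, x = 1 / (u+1)^2 := ⟨_, rfl⟩
  obtain ⟨q, hqdef⟩ : ∃ x : ℝ, x = 1 / (v+1)^2 := ⟨_, rfl⟩
  have hp0 : 0 < p := by rw [hpdef]; positivity
  have hq0 : 0 < q := by rw [hqdef]; positivity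
  have hp : p * (u+1)^2 = 1 := by rw [hpdef]; field_simp
  have hq : q * (v+1)^2 = 1 := by rw [hqdef]; field_simp
  have ecp : c / (u+1)^2 = c * p := by rw [hpdef]; ring
  have ecq : (1:ℝ) / (v+1)^2 = q := hqdef.symm
  rw [ecp, ecq]
  have hq1 : q ≤ 1 := aux_inv_le_one v q hv hq hq0
  have hp1 : p ≤ 1 := aux_inv_le_one u p hu hp hp0
  have huv0 : 0 ≤ u^2 * v := by positivity
  rcases le_or_gt U u with hcase | hcase
  · -- Case 1 : u large
    have hpu : p * u ≤ 1/4 := aux_pu u p hu hp hp0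
    have F1 : c * (p * u) ≤ c * (1/4) := mul_le_mul_of_nonneg_left hpu hc0.le
    have F2 : 0 ≤ c * (p * a) := mul_nonneg hc0.le (mul_nonneg hp0.le ha.le)
    have F3 : 0 ≤ c * (p * (u^2*v)) := mul_nonneg hc0.le (mul_nonneg hp0.le huv0)
    have F4 : q * (u^2*v) ≤ u^2*v := by
      have h2 : (u^2*v) * q ≤ (u^2*v) * 1 := mul_le_mul_of_nonneg_left hq1 huv0
      linarith [h2]
    have F5 : 0 ≤ q * b := mul_nonneg hq0.le hb.le
    linarith [F1, F2, F3, F4, F5, huv0]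
  · -- u < U, hence v ≥ V
    have hvV : V ≤ v := by linarith
    have hv1' : (1:ℝ) ≤ v := le_trans hV1 hvV
    have hqv : q * v ≤ 1 := aux_qv v q hv hq hq0
    rcases le_or_gt M (u^2*v) with hM2 | hM2
    · -- Case 2a : u²v large
      have hUU : U ≤ U^2 := by
        have h0 : (0:ℝ) ≤ U := by linarith
        calc U = U*1 := (mul_one U).symm
          _ ≤ U*U := mul_le_mul_of_nonneg_left hU1 h0
          _ = U^2 := (sq U).symm
      have huM : u ≤ u^2*v := by linarith
      have F1 : c * (p * (u - a - u^2*v)) ≤ 0 := by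
        have h1 : u - a - u^2*v ≤ 0 := by linarith
        have h2 : 0 ≤ c * p := mul_nonneg hc0.le hp0.le
        have h3 : (c*p) * (u - a - u^2*v) ≤ (c*p) * 0 := by
          exact mul_le_mul_of_nonneg_left h1 h2
        linarith [h3]
      have F2 : u^2 * (q * v) ≤ u^2 := by
        have := mul_le_mul_of_nonneg_left hqv (sq_nonneg u)
        linarith [this]
      have F3 : 0 ≤ q * b := mul_nonneg hq0.le hb.le
      have F4 : u^2 ≤ U^2 := pow_le_pow_left₀ hu hcase.le 2
      linarith [F1, F2, F3, F4]
    · -- Case 2b : u²v small, u small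
      have hut2 : u^2 ≤ t^2 := by
        have h1 : M / t^2 ≤ v := le_trans hVt hvV
        have h2 : u^2 * (M / t^2) ≤ u^2 * v :=
          mul_le_mul_of_nonneg_left h1 (sq_nonneg u)
        have ht2 : (0:ℝ) < t^2 := pow_pos htpos 2
        have h3 : u^2 * M ≤ t^2 * M := by
          have h4 : u^2 * (M / t^2) < M := lt_of_le_of_lt h2 hM2
          have h5 : u^2 * (M / t^2) * t^2 < M * t^2 :=
            mul_lt_mul_of_pos_right h4 ht2
          have h6 : u^2 * (M / t^2) * t^2 = u^2 * M := by field_simp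
          linarith [h6 ▸ h5]
        exact le_of_mul_le_mul_right h3 hMpos
      have hut : u ≤ t := le_of_pow_le_pow_left₀ two_ne_zero htpos.le hut2
      have hplb : 1 - 2*t ≤ p := aux_plb u t p hu hut hp hp0
      have hv3 : 2*M ≤ δ * v := by
        have h := (div_le_iff₀ hdpos).mp hVd
        have h2 : V * δ ≤ v * δ := mul_le_mul_of_nonneg_right hvV hdpos.le
        linarith [h, h2]
      have hqM : 2 * (q * M) ≤ δ := aux_qM v q M δ hv hq hq0 hdpos hv3
      have F1 : c * (p * u) ≤ c * t := by
        have h1 : p * u ≤ t := by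
          have h2 : p * u ≤ 1 * u := mul_le_mul_of_nonneg_right hp1 hu
          linarith [h2, hut]
        exact mul_le_mul_of_nonneg_left h1 hc0.le
      have F2 : c * a * (1 - 2*t) ≤ c * a * p :=
        mul_le_mul_of_nonneg_left hplb (by positivity)
      have F3 : 0 ≤ c * (p * (u^2*v)) := mul_nonneg hc0.le (mul_nonneg hp0.le huv0)
      have F4 : q * (u^2*v) ≤ δ/2 := by
        have h1 : q * (u^2*v) ≤ q * M := mul_le_mul_of_nonneg_left hM2.le hq0.le
        linarith
      have F5 : 0 ≤ q * b := mul_nonneg hq0.le hb.le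
      linarith [F1, F2, F3, F4, F5, htsum, huv0]
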